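/- Suppose A_1,...,A_m ⊆ [n] have the (k+d)-dimensional saturation property (d ≤ n−k). Then for any B ⊆ [n] with |B| ≤ d, the sets A_1∖B,...,A_m∖B have the k-dimensional saturation property. -/

import Mathlib

open Matrix

/-- The block matrix `𝒢_{A_1,…,A_ℓ}[V]`. -/
def Gmat {F : Type} [Field F] {k n ℓ : ℕ} (V : Matrix (Fin k) (Fin n) F)
    (A : Fin ℓ → Finset (Fin n)) :
    Matrix (Fin ℓ × Fin k) (Fin k ⊕ (Σ i : Fin ℓ, {x // x ∈ A i})) F :=
  Matrix.of fun p c =>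
    match c with
    | Sum.inl c => if p.2 = c then (1 : F) else 0
    | Sum.inr q => if p.1 = q.1 then V p.2 q.2.1 else 0

/-- If `A_1,…,A_m` have the `(k+d)`-dimensional saturation property (a generic, equivalently
over an infinite field some, `(k+d) × n` matrix `W` makes `𝒢_{A_1,…,A_m}[W]` have full row
rank `m(k+d)`), then for any `B ⊆ [n]` with `|B| ≤ d`, the sets `A_1∖B,…,A_m∖B` have the
`k`-dimensional saturation property. -/
theorem saturation_of_delete {F : Type} [Field F] [Infinite F] {k n d m : ℕ}
    (hk : k ≤ n) (hd : d ≤ n - k)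
    (A : Fin m → Finset (Fin n))
    (hsat : ∃ W : Matrix (Fin (k + d)) (Fin n) F, (Gmat W A).rank = m * (k + d))
    (B : Finset (Fin n)) (hB : B.card ≤ d) :
    ∃ W' : Matrix (Fin k) (Fin n) F, (Gmat W' (fun i => A i \ B)).rank = m * k := by
  classical
  obtain ⟨W, hW⟩ := hsat
  -- rows of Gmat W A are linearly independent
  have hLI : LinearIndependent F (Gmat W A) := by
    apply linearIndependent_iff_card_eq_finrank_span.mpr
    have h1 := (Gmat W A).rank_eq_finrank_span_row
    rw [hW] at h1
    simp [Set.finrank, ← h1]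
    exact h1
  -- kernel of vecMul against W restricted to B
  let Wb : Matrix (Fin (k+d)) {x // x ∈ B} F := fun i b => W i b.1
  let L := Wb.vecMulLinear
  have hker : k ≤ Module.finrank F (LinearMap.ker L) := by
    have h1 := LinearMap.finrank_range_add_finrank_ker L
    have h2 : Module.finrank F (LinearMap.range L) ≤ B.card := by
      have h3 := Submodule.finrank_le (LinearMap.range L)
      simpa [Module.finrank_fintype_fun_eq_card] using h3
    have h3 : Module.finrank F (Fin (k+d) → F) = k + d := by
      simp [Module.finrank_fintype_fun_eq_card]
    omega
  let bK := Module.finBasis F (LinearMap.ker L)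
  let s : Fin k → (Fin (k+d) → F) := fun p => (bK (Fin.castLE hker p) : Fin (k+d) → F)
  have hsmem : ∀ p, s p ∈ LinearMap.ker L := fun p => (bK (Fin.castLE hker p)).2
  have hsLI : LinearIndependent F s := by
    have h1 := bK.linearIndependent.comp _ (Fin.castLE_injective hker)
    exact h1.map' (LinearMap.ker L).subtype (Submodule.ker_subtype _)
  let S : Matrix (Fin k) (Fin (k+d)) F := Matrix.of s
  let W' : Matrix (Fin k) (Fin n) F := S * W
  have hW'B : ∀ p, ∀ x ∈ B, W' p x = 0 := by
    intro p x hx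
    have h0 : Matrix.vecMul (s p) Wb = 0 := by
      have h1 := hsmem p
      rwa [LinearMap.mem_ker, Matrix.vecMulLinear_apply] at h1
    have h2 := congrFun h0 ⟨x, hx⟩
    simpa [W', S, Matrix.mul_apply, Matrix.vecMul, dotProduct, Wb] using h2
  have hSinj : ∀ u : Fin k → F, Matrix.vecMul u S = 0 → u = 0 := by
    intro u hu
    have h1 : ∑ p, u p • s p = 0 := by
      funext c
      have := congrFun hu c
      simpa [Matrix.vecMul, dotProduct, S, Finset.sum_apply] using this
    have h2 := Fintype.linearIndependent_iff.mp hsLI u h1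
    funext p; exact h2 p
  refine ⟨W', ?_⟩
  have hLI' : LinearIndependent F (Gmat W' (fun i => A i \ B)) := by
    refine Fintype.linearIndependent_iff.mpr ?_
    intro g hg
    have hcol : ∀ c, ∑ p : Fin m × Fin k, g p * Gmat W' (fun i => A i \ B) p c = 0 := by
      intro c
      have := congrFun hg c
      simpa [Finset.sum_apply] using this
    have hid : ∀ c : Fin k, ∑ i : Fin m, g (i, c) = 0 := by
      intro c
      have := hcol (Sum.inl c)
      simpa [Gmat, Fintype.sum_prod_type, mul_ite, mul_one, mul_zero] using this
    have hblk : ∀ (i : Fin m) (x : Fin n), ∀ hx : x ∈ A i \ B,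
        ∑ p : Fin k, g (i, p) * W' p x = 0 := by
      intro i x hx
      have := hcol (Sum.inr ⟨i, ⟨x, hx⟩⟩)
      simpa [Gmat, Fintype.sum_prod_type, mul_ite, mul_zero, Finset.sum_ite_eq,
        Finset.sum_ite_eq'] using this
    let v : Fin m → Fin (k+d) → F := fun i => Matrix.vecMul (fun p => g (i, p)) S
    have hzero : ∀ q : Fin m × Fin (k+d), v q.1 q.2 = 0 := by
      apply Fintype.linearIndependent_iff.mp hLI (fun q => v q.1 q.2)
      funext c
      rw [Finset.sum_apply]
      match c with
      | Sum.inl c' =>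
        have hv : ∑ i : Fin m, v i c' = 0 := by
          calc ∑ i, v i c' = ∑ i, ∑ p, g (i,p) * S p c' := by
                simp [v, Matrix.vecMul, dotProduct]
            _ = ∑ p, ∑ i, g (i,p) * S p c' := Finset.sum_comm
            _ = ∑ p : Fin k, (∑ i, g (i,p)) * S p c' := by simp [Finset.sum_mul]
            _ = 0 := by simp [hid]
        simpa [Gmat, Fintype.sum_prod_type, mul_ite, mul_one, mul_zero] using hv
      | Sum.inr q =>
        obtain ⟨i₀, x, hx⟩ := q
        have key : ∑ qq : Fin (k+d), v i₀ qq * W qq x = ∑ p : Fin k, g (i₀,p) * W' p x := by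
          have h1 := congrFun (Matrix.vecMul_vecMul (fun p => g (i₀,p)) S W) x
          simpa [Matrix.vecMul, dotProduct, v, W'] using h1
        have hz : ∑ qq : Fin (k+d), v i₀ qq * W qq x = 0 := by
          rw [key]
          by_cases hxB : x ∈ B
          · exact Finset.sum_eq_zero fun p _ => by rw [hW'B p x hxB, mul_zero]
          · exact hblk i₀ x (Finset.mem_sdiff.mpr ⟨hx, hxB⟩)
        simpa [Gmat, Fintype.sum_prod_type, mul_ite, mul_zero, Finset.sum_ite_eq,
          Finset.sum_ite_eq'] using hz
    intro p
    have h1 : (fun q => g (p.1, q)) = 0 :=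
      hSinj _ (funext fun q => hzero (p.1, q))
    have := congrFun h1 p.2
    simpa using this
  have h2 := hLI'.rank_matrix
  simpa [Gmat] using h2
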